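/- For a graph G and a set C of vertices, if C is a dominating set and for every pair of distinct vertices u, v at distance at most two from each other we have N[u] ∩ C ≠ N[v] ∩ C, then C is an identifying code of G (i.e., C also separates all pairs of vertices at distance 3 or more). -/

import Mathlib

/-- The closed neighborhood of a vertex. -/
def closedNbr {V : Type*} (G : SimpleGraph V) (v : V) : Set V := insert v (G.neighborSet v)

/-- `C` is a dominating set: every vertex outside `C` has a neighbor in `C`. -/
def Dominating {V : Type*} (G : SimpleGraph V) (C : Set V) : Prop :=
  ∀ v ∉ C, ∃ c ∈ C, G.Adj v c

/-- `C` is a separating set: distinct vertices have distinct traces `N[v] ∩ C`. -/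
def Separating {V : Type*} (G : SimpleGraph V) (C : Set V) : Prop :=
  ∀ u v : V, u ≠ v → closedNbr G u ∩ C ≠ closedNbr G v ∩ C

theorem stmt0 {V : Type*} [Fintype V] (G : SimpleGraph V) (C : Set V)
    (hdom : Dominating G C)
    (hsep2 : ∀ u v : V, u ≠ v → G.Reachable u v → G.dist u v ≤ 2 →
      closedNbr G u ∩ C ≠ closedNbr G v ∩ C) :
    Dominating G C ∧ Separating G C := by
  refine ⟨hdom, fun u v huv heq => ?_⟩
  -- Key: if the traces are equal, the closed neighborhoods intersect C nontrivially
  -- unless they are empty; any common vertex gives a walk of length ≤ 2.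
  by_cases hnear : ∃ w : V, w ∈ closedNbr G u ∧ w ∈ closedNbr G v
  · obtain ⟨w, hwu, hwv⟩ := hnear
    have hwalk : ∃ p : G.Walk u v, p.length ≤ 2 := by
      rcases hwu with rfl | hadju
      · rcases hwv with rfl | hadjv
        · exact absurd rfl huv
        · exact ⟨SimpleGraph.Walk.cons (G.adj_symm ((G.mem_neighborSet _ _).1 hadjv)) SimpleGraph.Walk.nil, by simp⟩
      · rcases hwv with rfl | hadjv
        · exact ⟨SimpleGraph.Walk.cons ((G.mem_neighborSet _ _).1 hadju) SimpleGraph.Walk.nil, by simp⟩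
        · exact ⟨SimpleGraph.Walk.cons ((G.mem_neighborSet _ _).1 hadju)
            (SimpleGraph.Walk.cons (G.adj_symm ((G.mem_neighborSet _ _).1 hadjv)) SimpleGraph.Walk.nil), by simp⟩
    obtain ⟨p, hp⟩ := hwalk
    exact hsep2 u v huv ⟨p⟩ (le_trans (SimpleGraph.dist_le p) hp) heq
  · -- closed neighborhoods disjoint, so trace of u is empty, contradicting domination
    push_neg at hnear
    have hu_empty : closedNbr G u ∩ C = ∅ := by
      ext x
      simp only [Set.mem_inter_iff, Set.mem_empty_iff_false, iff_false, not_and]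
      intro hxu hxC
      have hxv : x ∉ closedNbr G v := hnear x hxu
      have : x ∈ closedNbr G v ∩ C := heq ▸ ⟨hxu, hxC⟩
      exact hxv this.1
    have huC : u ∉ C := by
      intro h
      have : u ∈ closedNbr G u ∩ C := ⟨Set.mem_insert _ _, h⟩
      simp [hu_empty] at this
    obtain ⟨c, hcC, hadj⟩ := hdom u huC
    have : c ∈ closedNbr G u ∩ C := ⟨Set.mem_insert_of_mem _ hadj, hcC⟩
    simp [hu_empty] at this
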